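/- Let M be a nonempty subset of Fin N with |M| < N, let θ = arcsin(√(|M|/N)) and k = ⌊π/(4θ)⌋. Then k ≤ (π/4)·√(N/|M|), and the probability of measuring a marked element after k Grover iterations satisfies ∑_{i ∈ M} ((G^k u)_i)² ≥ 1 − |M|/N. -/

import Mathlib

open Real

private lemma grover_trig1 (a t : ℝ) :
    Real.sin (a + 2 * t) = Real.sin a + 2 * Real.cos (a + t) * Real.sin t := by
  have h := Real.sin_sq_add_cos_sq t
  rw [show a + 2 * t = (a + t) + t by ring]
  simp only [Real.sin_add, Real.cos_add]
  linear_combination Real.sin a * h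

private lemma grover_trig2 (a t : ℝ) :
    Real.cos (a + 2 * t) = 2 * Real.cos (a + t) * Real.cos t - Real.cos a := by
  have h := Real.sin_sq_add_cos_sq t
  rw [show a + 2 * t = (a + t) + t by ring]
  simp only [Real.sin_add, Real.cos_add]
  linear_combination (-Real.cos a) * h

set_option maxHeartbeats 1200000 in
/-- For a nonempty set `M` of marked elements with `|M| < N`, taking
`θ = arcsin √(|M|/N)` and `k = ⌊π/(4θ)⌋` Grover iterations, we have
`k ≤ (π/4)√(N/|M|)` and the probability of measuring a marked element is at
least `1 - |M|/N`. -/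
theorem grover_multiple_marked_elements
    (N : ℕ) (hN : 0 < N) (M : Finset (Fin N)) (hM : M.Nonempty) (hMN : M.card < N)
    (u : EuclideanSpace ℝ (Fin N))
    (hu : ∀ i, u i = 1 / Real.sqrt N)
    (θ : ℝ) (hθ : θ = Real.arcsin (Real.sqrt (M.card / N)))
    (O D : EuclideanSpace ℝ (Fin N) →ₗ[ℝ] EuclideanSpace ℝ (Fin N))
    (hO : ∀ x, ∀ i, O x i = if i ∈ M then -x i else x i)
    (hD : ∀ x, D x = (2 * (inner ℝ u x : ℝ)) • u - x)
    (k : ℕ) (hk : k = ⌊Real.pi / (4 * θ)⌋₊) :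
    (k : ℝ) ≤ (Real.pi / 4) * Real.sqrt (N / M.card) ∧
      ∑ i ∈ M, ((⇑D ∘ ⇑O)^[k] u i) ^ 2 ≥ 1 - M.card / N := by
  set m : ℝ := (M.card : ℝ) with hmdef
  set n : ℝ := (N : ℝ) with hndef
  have hm : 0 < m := by rw [hmdef]; exact Nat.cast_pos.mpr (Finset.card_pos.mpr hM)
  have hn : 0 < n := by rw [hndef]; exact Nat.cast_pos.mpr hN
  have hmn : m < n := by rw [hmdef, hndef]; exact Nat.cast_lt.mpr hMN
  have hmn' : m / n < 1 := (div_lt_one hn).mpr hmn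
  have hmn0 : 0 ≤ m / n := by positivity
  -- square roots
  set sm : ℝ := Real.sqrt m with hsm
  set sn : ℝ := Real.sqrt n with hsn
  set snm : ℝ := Real.sqrt (n - m) with hsnm
  have hsm0 : 0 < sm := Real.sqrt_pos.mpr hm
  have hsn0 : 0 < sn := Real.sqrt_pos.mpr hn
  have hsnm0 : 0 < snm := Real.sqrt_pos.mpr (by linarith)
  have hsm2 : sm * sm = m := Real.mul_self_sqrt hm.le
  have hsn2 : sn * sn = n := Real.mul_self_sqrt hn.le
  have hsnm2 : snm * snm = n - m := Real.mul_self_sqrt (by linarith)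
  -- sin and cos of θ
  have hsinθ : Real.sin θ = sm / sn := by
    rw [hθ, Real.sin_arcsin (by linarith [Real.sqrt_nonneg (m / n)]) (Real.sqrt_le_one.mpr hmn'.le)]
    rw [Real.sqrt_div hm.le n]
  have hcosθ : Real.cos θ = snm / sn := by
    rw [hθ, Real.cos_arcsin, Real.sq_sqrt hmn0]
    rw [show (1 : ℝ) - m / n = (n - m) / n by field_simp]
    rw [Real.sqrt_div (by linarith) n]
  have hθpos : 0 < θ := by
    rw [hθ]; exact Real.arcsin_pos.mpr (Real.sqrt_pos.mpr (by positivity))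
  have hθlt : θ < Real.pi / 2 := by
    rw [hθ]
    refine Real.arcsin_lt_pi_div_two.mpr ?_
    calc Real.sqrt (m / n) < Real.sqrt 1 := Real.sqrt_lt_sqrt hmn0 hmn'
    _ = 1 := Real.sqrt_one
  -- key induction on iterates
  have key : ∀ j : ℕ, (⇑D ∘ ⇑O)^[j] u =
      fun i => if i ∈ M then Real.sin ((2 * j + 1) * θ) / sm
               else Real.cos ((2 * j + 1) * θ) / snm := by
    intro j
    induction j with
    | zero =>
      funext i
      simp only [Function.iterate_zero, id_eq, Nat.cast_zero]
      rw [hu i]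
      split_ifs with h
      · rw [show (2 * (0:ℝ) + 1) * θ = θ by ring, hsinθ]
        field_simp
      · rw [show (2 * (0:ℝ) + 1) * θ = θ by ring, hcosθ]
        field_simp
    | succ j ih =>
      set α : ℝ := (2 * j + 1) * θ with hα
      set v : EuclideanSpace ℝ (Fin N) :=
        WithLp.toLp 2 (fun i => if i ∈ M then Real.sin α / sm else Real.cos α / snm) with hv
      have hOv : ∀ i, O v i = if i ∈ M then -(Real.sin α / sm) else Real.cos α / snm := by
        intro i
        rw [hO]
        split_ifs with h
        · simp [hv, h]
        · simp [hv, h]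
      have hip : (inner ℝ u (O v) : ℝ) = Real.cos (α + θ) := by
        rw [PiLp.inner_apply]
        simp only [RCLike.inner_apply, conj_trivial]
        rw [← Finset.sum_add_sum_compl M]
        have h1 : ∑ i ∈ M, u i * O v i = m * ((1 / sn) * (-(Real.sin α / sm))) := by
          rw [Finset.sum_congr rfl (fun i hi => by rw [hu i, hOv i, if_pos hi])]
          rw [Finset.sum_const, nsmul_eq_mul]
        have h2 : ∑ i ∈ Mᶜ, u i * O v i = (n - m) * ((1 / sn) * (Real.cos α / snm)) := by
          rw [Finset.sum_congr rfl (fun i hi => by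
            rw [hu i, hOv i, if_neg (Finset.mem_compl.mp hi)])]
          rw [Finset.sum_const, nsmul_eq_mul, Finset.card_compl, Fintype.card_fin,
            Nat.cast_sub hMN.le]
        have e1 : m * ((1 / sn) * (-(Real.sin α / sm))) = -(Real.sin α * (sm / sn)) := by
          rw [← hsm2]; field_simp
        have e2 : (n - m) * ((1 / sn) * (Real.cos α / snm)) = Real.cos α * (snm / sn) := by
          rw [← hsnm2]; field_simp
        rw [Finset.sum_congr rfl (fun i _ => mul_comm (O v i) (u i)),
          Finset.sum_congr rfl (fun i _ => mul_comm (O v i) (u i))]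
        rw [h1, h2, e1, e2, Real.cos_add, hsinθ, hcosθ]
        ring
      have step : (⇑D ∘ ⇑O) v =
          fun i => if i ∈ M then Real.sin (α + 2 * θ) / sm
                   else Real.cos (α + 2 * θ) / snm := by
        funext i
        show D (O v) i = _
        rw [hD, hip]
        have : ((2 * Real.cos (α + θ)) • u - O v) i = 2 * Real.cos (α + θ) * u i - O v i := by
          simp [PiLp.sub_apply, PiLp.smul_apply, smul_eq_mul]
        rw [this, hu i, hOv i]
        split_ifs with h
        · rw [grover_trig1 α θ, hsinθ]
          field_simp
          try ring
        · rw [grover_trig2 α θ, hcosθ]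
          field_simp
          try ring
      have ih' : (⇑D ∘ ⇑O)^[j] u = v := by rw [hv, ← ih]
      rw [Function.iterate_succ_apply', ih']
      rw [step]
      funext i
      have hcast : (2 * ((j : ℝ) + 1) + 1) * θ = α + 2 * θ := by rw [hα]; ring
      push_cast
      rw [hcast]
  -- Part 1
  have hπ : (0:ℝ) < Real.pi := Real.pi_pos
  have hsinθpos : 0 < Real.sin θ := by rw [hsinθ]; positivity
  have hsinle : Real.sin θ ≤ θ := Real.sin_le hθpos.le
  have hsqrtnm : Real.sqrt (n / m) = sn / sm := by
    rw [Real.sqrt_div hn.le m]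
  have part1 : (k : ℝ) ≤ (Real.pi / 4) * Real.sqrt (n / m) := by
    have h1 : (k : ℝ) ≤ Real.pi / (4 * θ) := by
      rw [hk]; exact Nat.floor_le (by positivity)
    have h2 : Real.pi / (4 * θ) ≤ Real.pi / (4 * Real.sin θ) := by
      gcongr
    refine h1.trans (h2.trans (le_of_eq ?_))
    rw [hsqrtnm, hsinθ]
    field_simp
  -- Part 2
  have hφ : (2 * (k:ℝ) + 1) * θ = 2 * k * θ + θ := by ring
  have hkle : (k : ℝ) ≤ Real.pi / (4 * θ) := by
    rw [hk]; exact Nat.floor_le (by positivity)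
  have hklt : Real.pi / (4 * θ) < k + 1 := by
    rw [hk]; exact Nat.lt_floor_add_one _
  set φ : ℝ := (2 * (k:ℝ) + 1) * θ with hφdef
  have hk4 : (k:ℝ) * (4 * θ) ≤ Real.pi := (le_div_iff₀ (by positivity)).mp hkle
  have hk4' : Real.pi < ((k:ℝ) + 1) * (4 * θ) := (div_lt_iff₀ (by positivity)).mp hklt
  have hb1 : φ - Real.pi / 2 ≤ θ := by nlinarith [hφ]
  have hb2 : Real.pi / 2 - φ ≤ θ := by nlinarith [hφ]
  have habs : |φ - Real.pi / 2| ≤ θ := abs_le.mpr ⟨by linarith, hb1⟩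
  have hcosθ0 : 0 ≤ Real.cos θ := Real.cos_nonneg_of_mem_Icc ⟨by linarith, hθlt.le⟩
  have hsinφ : Real.cos θ ≤ Real.sin φ := by
    have h1 : Real.cos θ ≤ Real.cos |φ - Real.pi / 2| := by
      apply Real.cos_le_cos_of_nonneg_of_le_pi (abs_nonneg _) (by linarith) habs
    rwa [Real.cos_abs, Real.cos_sub_pi_div_two] at h1
  have hsum : ∑ i ∈ M, ((⇑D ∘ ⇑O)^[k] u i) ^ 2 = Real.sin φ ^ 2 := by
    have e : ∀ i ∈ M, (((fun i => if i ∈ M then Real.sin ((2 * (k:ℝ) + 1) * θ) / sm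
        else Real.cos ((2 * (k:ℝ) + 1) * θ) / snm) : Fin N → ℝ) i) ^ 2
        = Real.sin φ ^ 2 / m := by
      intro i hi
      simp only [if_pos hi, ← hφdef]
      rw [div_pow, show sm ^ 2 = m by rw [sq]; exact hsm2]
    rw [key k, Finset.sum_congr rfl e, Finset.sum_const, nsmul_eq_mul, ← hmdef]
    field_simp
  refine ⟨part1, ?_⟩
  rw [hsum]
  have hcos2 : Real.cos θ ^ 2 = 1 - m / n := by
    rw [hcosθ, div_pow, sq, sq, hsnm2, hsn2]
    field_simp
  rw [ge_iff_le, ← hcos2]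
  exact pow_le_pow_left₀ hcosθ0 hsinφ 2
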